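/- arXiv:cs/0103019 — 4 statements merged into one kernel-verified Lean document; each statement's English description precedes it below -/
import Mathlib

section
/- If a 3CNF formula φ is satisfiable, then the game f(φ) has a deterministic joint strategy with expected payoff exactly 1. -/
/-- If a 3CNF formula φ (with n clauses, clause i having literals `C i j`)
is satisfiable, then the game f(φ) has a deterministic joint strategy with
expected payoff exactly 1. -/
theorem stmt6 (n m : ℕ) (hn : 0 < n)
    (C : Fin n → Fin 3 → Fin m × Bool)
    (α : Fin m → Bool) (hα : ∀ i : Fin n, ∃ j : Fin 3, α (C i j).1 = (C i j).2) :
    ∃ (S1 : Fin m → Bool) (S2 : Fin n → Fin 3),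
      (∑ i : Fin n, ∑ j : Fin 3, (1 / (3 * n : ℝ)) *
        (if S2 i = j ∧ S1 (C i j).1 = (C i j).2 then 3 else 0)) = 1 := by
  refine ⟨α, fun i => (hα i).choose, ?_⟩
  have hinner : ∀ i : Fin n, (∑ j : Fin 3, (1 / (3 * n : ℝ)) *
      (if (hα i).choose = j ∧ α (C i j).1 = (C i j).2 then 3 else 0))
      = 1 / (3 * n : ℝ) * 3 := by
    intro i
    rw [Finset.sum_eq_single (hα i).choose]
    · rw [if_pos ⟨rfl, (hα i).choose_spec⟩]
    · intro j _ hj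
      rw [if_neg (fun h => hj h.1.symm), mul_zero]
    · intro h; exact absurd (Finset.mem_univ _) h
  simp only [hinner, Finset.sum_const, Finset.card_univ, Fintype.card_fin, nsmul_eq_mul]
  have hn' : (n : ℝ) ≠ 0 := Nat.cast_ne_zero.mpr hn.ne'
  field_simp
end

section
/- A 3CNF formula φ is satisfiable if and only if the game f(φ) admits a deterministic joint strategy (S_1, S_2) with expected payoff at least 1. -/
lemma game_inner_sum (n m : ℕ) (hn : 0 < n) (C : Fin n → Fin 3 → Fin m × Bool)
    (S1 : Fin m → Bool) (S2 : Fin n → Fin 3) (i : Fin n) :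
    ∑ j : Fin 3, (1 / (3 * n : ℝ)) *
        (if S2 i = j ∧ S1 (C i j).1 = (C i j).2 then 3 else 0) =
      if S1 (C i (S2 i)).1 = (C i (S2 i)).2 then (1 / n : ℝ) else 0 := by
  have hsingle : ∑ j : Fin 3,
      (if S2 i = j ∧ S1 (C i j).1 = (C i j).2 then (3:ℝ) else 0) =
      (if S1 (C i (S2 i)).1 = (C i (S2 i)).2 then (3:ℝ) else 0) := by
    rw [Finset.sum_eq_single (S2 i)]
    · simp
    · intro j _ hj
      simp [Ne.symm hj]
    · simp
  rw [← Finset.mul_sum, hsingle]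
  have hn' : (n : ℝ) ≠ 0 := Nat.cast_ne_zero.mpr hn.ne'
  split <;> field_simp <;> ring

/-- A 3CNF formula φ is satisfiable if and only if the game f(φ) admits a
deterministic joint strategy (S1, S2) with expected payoff at least 1. -/
theorem stmt8 (n m : ℕ) (hn : 0 < n)
    (C : Fin n → Fin 3 → Fin m × Bool) :
    (∃ α : Fin m → Bool, ∀ i : Fin n, ∃ j : Fin 3, α (C i j).1 = (C i j).2) ↔
      (∃ (S1 : Fin m → Bool) (S2 : Fin n → Fin 3),
        1 ≤ ∑ i : Fin n, ∑ j : Fin 3, (1 / (3 * n : ℝ)) *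
          (if S2 i = j ∧ S1 (C i j).1 = (C i j).2 then 3 else 0)) := by
  have hn' : (n : ℝ) ≠ 0 := Nat.cast_ne_zero.mpr hn.ne'
  constructor
  · rintro ⟨α, hα⟩
    refine ⟨α, fun i => (hα i).choose, ?_⟩
    have h : ∀ i : Fin n, (∑ j : Fin 3, (1 / (3 * n : ℝ)) *
        (if (hα i).choose = j ∧ α (C i j).1 = (C i j).2 then 3 else 0)) = (1 / n : ℝ) := by
      intro i
      rw [game_inner_sum n m hn C α (fun i => (hα i).choose) i, if_pos (hα i).choose_spec]
    rw [Finset.sum_congr rfl (fun i _ => h i)]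
    simp [Finset.sum_const]
    rw [mul_inv_cancel₀ hn']
  · rintro ⟨S1, S2, hS⟩
    refine ⟨S1, fun i => ⟨S2 i, ?_⟩⟩
    by_contra hbad
    have hlt : ∑ i : Fin n, ∑ j : Fin 3, (1 / (3 * n : ℝ)) *
        (if S2 i = j ∧ S1 (C i j).1 = (C i j).2 then 3 else 0) < 1 := by
      have : ∑ i : Fin n, ∑ j : Fin 3, (1 / (3 * n : ℝ)) *
          (if S2 i = j ∧ S1 (C i j).1 = (C i j).2 then 3 else 0)
          < ∑ _i : Fin n, (1 / n : ℝ) := by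
        apply Finset.sum_lt_sum
        · intro k _
          rw [game_inner_sum n m hn C S1 S2 k]
          split
          · exact le_refl _
          · positivity
        · refine ⟨i, Finset.mem_univ i, ?_⟩
          rw [game_inner_sum n m hn C S1 S2 i, if_neg hbad]
          positivity
      calc _ < ∑ _i : Fin n, (1 / n : ℝ) := this
        _ = 1 := by simp [Finset.sum_const]; rw [mul_inv_cancel₀ hn']
    linarith
end

section
/- In the game f(φ), if some clause of φ is not satisfied by the truth assignment S_1 (i.e., all three of its literals are false under S_1), then for every strategy S_2 of player 2 the expected payoff of (S_1, S_2) is at most 1 − 1/n, where n is the number of clauses. -/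
/-- In f(φ), if some clause of φ is unsatisfied by the truth assignment S1
(all three of its literals are false under S1), then for every strategy S2 of
player 2 the expected payoff of (S1,S2) is at most 1 − 1/n. -/
theorem stmt13 (n m : ℕ) (hn : 0 < n)
    (C : Fin n → Fin 3 → Fin m × Bool)
    (S1 : Fin m → Bool)
    (i0 : Fin n) (hbad : ∀ j : Fin 3, S1 (C i0 j).1 ≠ (C i0 j).2) :
    ∀ S2 : Fin n → Fin 3,
      (∑ i : Fin n, ∑ j : Fin 3, (1 / (3 * n : ℝ)) *
          (if S2 i = j ∧ S1 (C i j).1 = (C i j).2 then 3 else 0))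
        ≤ 1 - 1 / n := by
  intro S2
  have hn' : (0:ℝ) < n := by exact_mod_cast hn
  have hstep : ∀ i : Fin n, (∑ j : Fin 3, (1 / (3 * n : ℝ)) *
      (if S2 i = j ∧ S1 (C i j).1 = (C i j).2 then 3 else 0))
      ≤ 1/(n:ℝ) - (if i = i0 then 1/(n:ℝ) else 0) := by
    intro i
    by_cases h : i = i0
    · subst h
      have hz : ∀ j : Fin 3, (1 / (3 * n : ℝ)) *
          (if S2 i = j ∧ S1 (C i j).1 = (C i j).2 then 3 else 0) = 0 := by
        intro j
        simp [hbad j]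
      rw [Finset.sum_congr rfl fun j _ => hz j]
      simp
    · rw [if_neg h]
      have hle : ∀ j : Fin 3, (1 / (3 * n : ℝ)) *
          (if S2 i = j ∧ S1 (C i j).1 = (C i j).2 then 3 else 0)
          ≤ (1 / (3 * n : ℝ)) * (if S2 i = j then 3 else 0) := by
        intro j
        apply mul_le_mul_of_nonneg_left _ (by positivity)
        by_cases hj : S2 i = j <;> by_cases hs : S1 (C i j).1 = (C i j).2 <;>
          simp [hj, hs]
      calc _ ≤ ∑ j : Fin 3, (1 / (3 * n : ℝ)) * (if S2 i = j then 3 else 0) :=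
              Finset.sum_le_sum fun j _ => hle j
        _ = (1 / (3 * n : ℝ)) * 3 := by
              rw [← Finset.mul_sum, Finset.sum_ite_eq]
              simp
        _ = 1/(n:ℝ) - 0 := by field_simp; ring
  calc _ ≤ ∑ i : Fin n, (1/(n:ℝ) - (if i = i0 then 1/(n:ℝ) else 0)) :=
        Finset.sum_le_sum fun i _ => hstep i
    _ = 1 - 1/n := by
        rw [Finset.sum_sub_distrib, Finset.sum_const, Finset.sum_ite_eq']
        simp
        field_simp
end

section
/- MAX-version hardness transfer: if φ is a 3CNF formula with n clauses such that every truth assignment satisfies at most n−1 clauses, then every joint strategy in f(φ) has expected payoff at most 1 − 1/n; hence distinguishing maximum expected payoff 1 from ≤ 1 − 1/n in f(φ) is equivalent to deciding satisfiability of φ. -/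
/-- Hardness transfer for the MAX version: if every truth assignment satisfies
at most n−1 of the n clauses of φ, then every joint strategy in f(φ) has
expected payoff at most 1 − 1/n. -/
theorem stmt19 (n m : ℕ) (hn : 0 < n)
    (C : Fin n → Fin 3 → Fin m × Bool)
    (hφ : ∀ α : Fin m → Bool,
      (Finset.univ.filter
        (fun i : Fin n => ∃ j : Fin 3, α (C i j).1 = (C i j).2)).card ≤ n - 1) :
    ∀ (S1 : Fin m → Bool) (S2 : Fin n → Fin 3),
      (∑ i : Fin n, ∑ j : Fin 3, (1 / (3 * n : ℝ)) *
          (if S2 i = j ∧ S1 (C i j).1 = (C i j).2 then 3 else 0))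
        ≤ 1 - 1 / n := by
  intro S1 S2
  have hn' : (0:ℝ) < n := by exact_mod_cast hn
  have hinner : ∀ i : Fin n,
      (∑ j : Fin 3, (1 / (3 * n : ℝ)) *
          (if S2 i = j ∧ S1 (C i j).1 = (C i j).2 then 3 else 0))
      ≤ (if ∃ j : Fin 3, S1 (C i j).1 = (C i j).2 then (1 : ℝ) / n else 0) := by
    intro i
    have hsum : (∑ j : Fin 3, (1 / (3 * n : ℝ)) *
          (if S2 i = j ∧ S1 (C i j).1 = (C i j).2 then 3 else 0))
        = (1 / (3 * n : ℝ)) *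
          (if S1 (C i (S2 i)).1 = (C i (S2 i)).2 then 3 else 0) := by
      rw [Finset.sum_eq_single_of_mem (S2 i) (Finset.mem_univ _)]
      · simp
      · intro j _ hj
        rw [if_neg (by tauto)]
        ring
    rw [hsum]
    by_cases h : S1 (C i (S2 i)).1 = (C i (S2 i)).2
    · rw [if_pos h, if_pos ⟨S2 i, h⟩]
      rw [div_mul_eq_mul_div, div_le_div_iff₀ (by positivity) hn']
      ring_nf
      nlinarith
    · rw [if_neg h]
      simp
      positivity
  calc (∑ i : Fin n, ∑ j : Fin 3, (1 / (3 * n : ℝ)) *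
          (if S2 i = j ∧ S1 (C i j).1 = (C i j).2 then 3 else 0))
      ≤ ∑ i : Fin n, (if ∃ j : Fin 3, S1 (C i j).1 = (C i j).2 then (1 : ℝ) / n else 0) :=
        Finset.sum_le_sum fun i _ => hinner i
    _ = ((Finset.univ.filter
        (fun i : Fin n => ∃ j : Fin 3, S1 (C i j).1 = (C i j).2)).card : ℝ) * (1 / n) := by
        rw [Finset.sum_ite, Finset.sum_const, Finset.sum_const_zero, add_zero,
          nsmul_eq_mul]
    _ ≤ ((n - 1 : ℕ) : ℝ) * (1 / n) := by
        apply mul_le_mul_of_nonneg_right _ (by positivity)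
        exact_mod_cast hφ S1
    _ ≤ 1 - 1 / n := by
        rw [Nat.cast_sub hn, sub_mul, Nat.cast_one, one_mul,
          mul_one_div, div_self (ne_of_gt hn')]
end
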